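/- arXiv:1004.3320 — 2 statements merged into one kernel-verified Lean document; each statement's English description precedes it below -/
import Mathlib

section
/- In the additively weighted Voronoi diagram of a family of disks, every Voronoi cell is star-shaped with respect to the center of its disk: if x ∈ cell(u), then for every t ∈ [0,1], the point c_u + t·(x - c_u) also lies in cell(u). -/
/-- every cell of the additively weighted Voronoi diagram is
star-shaped with respect to the center of its disk. -/
theorem wvd_cell_starShaped {ι : Type*}
    (S : Finset ι) (c : ι → EuclideanSpace ℝ (Fin 2)) (r : ι → ℝ)
    (u : ι) (hu : u ∈ S)
    (x : EuclideanSpace ℝ (Fin 2))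
    (hx : ∀ v ∈ S, dist x (c u) - r u ≤ dist x (c v) - r v) :
    ∀ t : ℝ, t ∈ Set.Icc (0 : ℝ) 1 →
      ∀ v ∈ S,
        dist (c u + t • (x - c u)) (c u) - r u ≤
          dist (c u + t • (x - c u)) (c v) - r v := by
  intro t ⟨ht0, ht1⟩ v hv
  set y := c u + t • (x - c u) with hy
  have h1 : dist y (c u) = t * dist x (c u) := by
    rw [dist_eq_norm, dist_eq_norm]
    simp [hy, norm_smul, abs_of_nonneg ht0]
  have h2 : dist x y = (1 - t) * dist x (c u) := by
    rw [dist_eq_norm, dist_eq_norm]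
    have : x - y = (1 - t) • (x - c u) := by
      simp [hy, sub_smul, one_smul]
      abel
    rw [this, norm_smul, Real.norm_eq_abs, abs_of_nonneg (by linarith)]
  have htri : dist x (c v) ≤ dist x y + dist y (c v) := dist_triangle _ _ _
  have := hx v hv
  linarith
end

section
/- Let R and B be two dominating sets of a disk graph on disk set D such that no disk of R ∪ B properly contains another disk of R ∪ B, and assume suitable non-degeneracy. Then for every disk u ∈ D there exist r ∈ R and b ∈ B, both intersecting u, such that the weighted Voronoi cells of r and b in the WVD of R ∪ B share a boundary point (a point x with pow(x,r) = pow(x,b) ≤ pow(x,w) for all w ∈ R ∪ B). -/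
open Finset

/-- Key segment/IVT lemma, symmetric in the two colors: walking from `p`
towards the center of a `Y`-dominator `b`, the minimum of the power functions
over `X` and over `Y` must coincide somewhere, and every minimizer at such a
point still intersects the disk around `p`. -/
lemma segment_key {ι : Type*} [DecidableEq ι]
    (X Y : Finset ι) (c : ι → EuclideanSpace ℝ (Fin 2)) (r : ι → ℝ)
    (hX : X.Nonempty) (p : EuclideanSpace ℝ (Fin 2)) (ru : ℝ)
    (b : ι) (hb : b ∈ Y) (hbd : dist p (c b) ≤ ru + r b)
    (hnc : ∀ u ∈ X ∪ Y, ∀ v ∈ X ∪ Y, u ≠ v → ¬ (dist (c u) (c v) + r u ≤ r v))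
    (hmin : X.inf' hX (fun s => dist p (c s) - r s)
          ≤ Y.inf' ⟨b, hb⟩ (fun s => dist p (c s) - r s)) :
    ∃ a ∈ X, ∃ b' ∈ Y,
      dist p (c a) ≤ ru + r a ∧ dist p (c b') ≤ ru + r b' ∧
      ∃ x : EuclideanSpace ℝ (Fin 2),
        dist x (c a) - r a = dist x (c b') - r b' ∧
        ∀ w ∈ X ∪ Y, dist x (c a) - r a ≤ dist x (c w) - r w := by
  have hY : Y.Nonempty := ⟨b, hb⟩
  set x : ℝ → EuclideanSpace ℝ (Fin 2) := fun t => AffineMap.lineMap p (c b) t with hxdef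
  set fX : ℝ → ℝ := fun t => X.inf' hX (fun s => dist (x t) (c s) - r s) with hfX
  set fY : ℝ → ℝ := fun t => Y.inf' hY (fun s => dist (x t) (c s) - r s) with hfY
  have hxcont : Continuous x := AffineMap.lineMap_continuous
  have hcont : Continuous (fun t => fY t - fX t) :=
    (Continuous.finset_inf'_apply hY fun i _ =>
        (hxcont.dist continuous_const).sub continuous_const).sub
      (Continuous.finset_inf'_apply hX fun i _ =>
        (hxcont.dist continuous_const).sub continuous_const)
  have hx0 : x 0 = p := AffineMap.lineMap_apply_zero p (c b)
  have hx1 : x 1 = c b := AffineMap.lineMap_apply_one p (c b)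
  have h0 : 0 ≤ fY 0 - fX 0 := by
    have : fX 0 ≤ fY 0 := by simp only [hfX, hfY, hx0]; exact hmin
    linarith
  have h1 : fY 1 - fX 1 ≤ 0 := by
    have hYle : fY 1 ≤ -(r b) := by
      calc fY 1 ≤ dist (x 1) (c b) - r b := Finset.inf'_le _ hb
        _ = -(r b) := by rw [hx1, dist_self]; ring
    have hXge : -(r b) ≤ fX 1 := by
      apply Finset.le_inf'
      intro s hs
      rcases eq_or_ne s b with rfl | hne
      · simp [hx1]
      · have hn := hnc b (Finset.mem_union_right _ hb) s (Finset.mem_union_left _ hs) hne.symm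
        have hd : r s < dist (c b) (c s) + r b := lt_of_not_ge hn
        simp only [hx1]
        linarith
    linarith
  obtain ⟨t, ht, hteq⟩ := intermediate_value_Icc' (by norm_num : (0:ℝ) ≤ 1)
    hcont.continuousOn ⟨h1, h0⟩
  have hteq' : fY t = fX t := by
    have : fY t - fX t = 0 := hteq
    linarith
  have hXYeq : (X.inf' hX fun s => dist (x t) (c s) - r s)
      = (Y.inf' hY fun s => dist (x t) (c s) - r s) := hteq'.symm
  obtain ⟨a, ha, haeq⟩ := Finset.exists_mem_eq_inf' hX (fun s => dist (x t) (c s) - r s)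
  obtain ⟨b', hb', hb'eq⟩ := Finset.exists_mem_eq_inf' hY (fun s => dist (x t) (c s) - r s)
  have ht0 : (0:ℝ) ≤ t := ht.1
  have ht1 : t ≤ 1 := ht.2
  have hdp : dist (x t) p = t * dist p (c b) := by
    rw [hxdef]
    simpa [abs_of_nonneg ht0] using dist_lineMap_left p (c b) t
  have hdb : dist (x t) (c b) = (1 - t) * dist p (c b) := by
    rw [hxdef]
    simpa [abs_of_nonneg (by linarith : (0:ℝ) ≤ 1 - t)] using dist_lineMap_right p (c b) t
  -- pow(x t, a) = fX t = fY t, each minimizer dominates the disk around p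
  have hglob : ∀ w ∈ X ∪ Y, dist (x t) (c a) - r a ≤ dist (x t) (c w) - r w := by
    intro w hw
    rcases Finset.mem_union.mp hw with hw | hw
    · rw [← haeq]; exact Finset.inf'_le _ hw
    · rw [← haeq, hXYeq]; exact Finset.inf'_le _ hw
  have hkey : ∀ s, dist (x t) (c s) - r s ≤ dist (x t) (c b) - r b →
      dist p (c s) ≤ ru + r s := by
    intro s hs
    have h1 : dist p (c s) ≤ dist p (x t) + dist (x t) (c s) := dist_triangle _ _ _
    have h2 : dist (x t) (c s) ≤ (1 - t) * dist p (c b) - r b + r s := by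
      rw [← hdb] at *; linarith
    have h3 : dist p (x t) = t * dist p (c b) := by rw [dist_comm]; exact hdp
    nlinarith [dist_nonneg (x := p) (y := c b)]
  have hda : dist p (c a) ≤ ru + r a :=
    hkey a (hglob b (Finset.mem_union_right _ hb))
  have hdb' : dist p (c b') ≤ ru + r b' := by
    apply hkey b'
    have h1 : dist (x t) (c b') - r b' = dist (x t) (c a) - r a := by
      rw [← hb'eq, ← hXYeq, haeq]
    rw [h1]
    exact hglob b (Finset.mem_union_right _ hb)
  refine ⟨a, ha, b', hb', hda, hdb', x t, ?_, hglob⟩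
  rw [← haeq, ← hb'eq]
  exact hXYeq

/-- locality condition: if `R` and `B` are dominating sets of a
disk graph on `D`, no disk of `R ∪ B` properly contains another disk of
`R ∪ B`, and no three centers of disks of `R ∪ B` are collinear, then every
disk `u ∈ D` has a red dominator `a ∈ R` and a blue dominator `b ∈ B` whose
weighted Voronoi cells in the WVD of `R ∪ B` share a boundary point. -/
theorem locality_condition {ι : Type*} [DecidableEq ι]
    (D R B : Finset ι) (c : ι → EuclideanSpace ℝ (Fin 2)) (r : ι → ℝ)
    (hr : ∀ u ∈ D, 0 < r u)
    (hR : R ⊆ D) (hB : B ⊆ D)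
    (hRdom : ∀ u ∈ D, ∃ s ∈ R, dist (c u) (c s) ≤ r u + r s)
    (hBdom : ∀ u ∈ D, ∃ s ∈ B, dist (c u) (c s) ≤ r u + r s)
    (hnc : ∀ u ∈ R ∪ B, ∀ v ∈ R ∪ B, u ≠ v →
      ¬ (dist (c u) (c v) + r u ≤ r v))
    (hgen : ∀ a ∈ R ∪ B, ∀ b ∈ R ∪ B, ∀ d ∈ R ∪ B,
      a ≠ b → b ≠ d → a ≠ d →
      ¬ Collinear ℝ ({c a, c b, c d} : Set (EuclideanSpace ℝ (Fin 2)))) :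
    ∀ u ∈ D, ∃ a ∈ R, ∃ b ∈ B,
      dist (c u) (c a) ≤ r u + r a ∧
      dist (c u) (c b) ≤ r u + r b ∧
      ∃ x : EuclideanSpace ℝ (Fin 2),
        dist x (c a) - r a = dist x (c b) - r b ∧
        ∀ w ∈ R ∪ B, dist x (c a) - r a ≤ dist x (c w) - r w := by
  intro u hu
  obtain ⟨rd, hrd, hrdd⟩ := hRdom u hu
  obtain ⟨bd, hbd, hbdd⟩ := hBdom u hu
  have hRne : R.Nonempty := ⟨rd, hrd⟩
  have hBne : B.Nonempty := ⟨bd, hbd⟩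
  rcases le_total (R.inf' hRne (fun s => dist (c u) (c s) - r s))
      (B.inf' hBne (fun s => dist (c u) (c s) - r s)) with hle | hle
  · obtain ⟨a, ha, b', hb', hda, hdb', x, hxeq, hxmin⟩ :=
      segment_key R B c r hRne (c u) (r u) bd hbd hbdd hnc
        (le_trans hle (le_of_eq (by congr)))
    exact ⟨a, ha, b', hb', hda, hdb', x, hxeq, hxmin⟩
  · have hnc' : ∀ a ∈ B ∪ R, ∀ v ∈ B ∪ R, a ≠ v → ¬ (dist (c a) (c v) + r a ≤ r v) := by
      intro a ha v hv hav
      exact hnc a (by rwa [Finset.union_comm]) v (by rwa [Finset.union_comm]) hav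
    obtain ⟨a, ha, b', hb', hda, hdb', x, hxeq, hxmin⟩ :=
      segment_key B R c r hBne (c u) (r u) rd hrd hrdd hnc'
        (le_trans hle (le_of_eq (by congr)))
    refine ⟨b', hb', a, ha, hdb', hda, x, hxeq.symm, ?_⟩
    intro w hw
    rw [← hxeq]
    exact hxmin w (by rwa [Finset.union_comm])
end
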